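/- Let H be a Hermitian operator, φ a normalized state with energy width ΔE, and α > 1. For times t < ħπ/(2αΔE), one can write U(t)|φ⟩ = e^{iθ}√(1−λ²)|φ⟩ + λ|r⟩ where |r⟩ is a unit vector orthogonal to |φ⟩, θ ∈ ℝ, and λ² ≤ 1 − (1 − 1/α²)cos(αΔE t/ħ) + 1/α². -/

import Mathlib

open scoped InnerProductSpace

private lemma key_ineq (d s : ℝ) (hd0 : 0 < d) (hd1 : d < 1)
    (hs0 : 0 ≤ s) (hs : s < Real.pi / 2)
    (hB : 0 < (1 - d) * Real.cos s - d) :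
    0 ≤ 1 - d * s ^ 2 / 2 ∧
      (1 - d) * Real.cos s - d ≤ (1 - d * s ^ 2 / 2) ^ 2 := by
  have hπ := Real.pi_gt_d2
  have hπ' := Real.pi_lt_d2
  have hπpos : (0:ℝ) < Real.pi := by linarith
  have hPpos : (0:ℝ) < Real.pi ^ 2 := by positivity
  have hcos : Real.cos s ≤ 1 - 2 / Real.pi ^ 2 * s ^ 2 := by
    apply Real.cos_le_one_sub_mul_cos_sq
    rw [abs_of_nonneg hs0]; nlinarith
  have hu : s ^ 2 < Real.pi ^ 2 / 4 := by nlinarith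
  have hd2 : d < 1 / 2 := by nlinarith [Real.cos_le_one s]
  have hP10 : Real.pi ^ 2 < 10 := by nlinarith
  have hv0 : 0 ≤ d * s ^ 2 := mul_nonneg hd0.le (sq_nonneg s)
  have ha : 4 * (d * s ^ 2) ≤ d * Real.pi ^ 2 := by
    nlinarith [mul_le_mul_of_nonneg_left hu.le hd0.le]
  have hb : 2 * (d * s ^ 2) ≤ s ^ 2 := by
    nlinarith [mul_le_mul_of_nonneg_right hd2.le (sq_nonneg s)]
  have hc : d * s ^ 2 * Real.pi ^ 2 ≤ d * s ^ 2 * 10 :=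
    mul_le_mul_of_nonneg_left hP10.le hv0
  have hg : 0 ≤ 2 * d - d * s ^ 2 + 2 * s ^ 2 * (1 - d) / Real.pi ^ 2
      + (d * s ^ 2) ^ 2 / 4 := by
    have hmul : 0 ≤ Real.pi ^ 2 * (2 * d - d * s ^ 2
        + 2 * s ^ 2 * (1 - d) / Real.pi ^ 2 + (d * s ^ 2) ^ 2 / 4) := by
      have hexp : Real.pi ^ 2 * (2 * d - d * s ^ 2
          + 2 * s ^ 2 * (1 - d) / Real.pi ^ 2 + (d * s ^ 2) ^ 2 / 4)
          = 2 * (d * Real.pi ^ 2) - d * s ^ 2 * Real.pi ^ 2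
            + 2 * s ^ 2 - 2 * (d * s ^ 2)
            + (d * s ^ 2) ^ 2 * Real.pi ^ 2 / 4 := by
        field_simp; ring
      rw [hexp]
      nlinarith [mul_nonneg (sq_nonneg (d * s ^ 2)) hPpos.le]
    exact nonneg_of_mul_nonneg_right hmul hPpos
  constructor
  · nlinarith [mul_le_mul_of_nonneg_left hu.le hd0.le]
  · have h3 := mul_le_mul_of_nonneg_left hcos (by linarith : (0:ℝ) ≤ 1 - d)
    have h4 : (1 - d) * (1 - 2 / Real.pi ^ 2 * s ^ 2) - d
        = (1 - d * s ^ 2 / 2) ^ 2 - (2 * d - d * s ^ 2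
          + 2 * s ^ 2 * (1 - d) / Real.pi ^ 2 + (d * s ^ 2) ^ 2 / 4) := by
      field_simp; ring
    linarith [hg, h3, h4.le, h4.ge]

/-- decomposition of the evolved state.  For `t < hbarπ/(2αΔE)` one
can write `U(t)|φ⟩ = e^{iθ}√(1−λ²)|φ⟩ + r` with `r ⟂ φ` and residual weight
`λ² = ‖r‖² ≤ 1 − (1 − 1/α²)cos(αΔE t/hbar) + 1/α²`. -/
theorem evolved_state_decomposition
    {n : ℕ} {E : Type*} [NormedAddCommGroup E] [InnerProductSpace ℂ E]
    [FiniteDimensional ℂ E]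
    (H : E →ₗ[ℂ] E) (hH : LinearMap.IsSymmetric H)
    (ψ : OrthonormalBasis (Fin n) ℂ E) (En : Fin n → ℝ)
    (heig : ∀ k, H (ψ k) = (En k : ℂ) • ψ k)
    (φ : E) (hφ : ‖φ‖ = 1)
    (p : Fin n → ℝ) (hp : ∀ k, p k = ‖⟪ψ k, φ⟫_ℂ‖ ^ 2)
    (Emean : ℝ) (hmean : Emean = ∑ k, p k * En k)
    (ΔE : ℝ) (hΔE : 0 ≤ ΔE) (hvar : ΔE ^ 2 = ∑ k, p k * (En k - Emean) ^ 2)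
    (hbar : ℝ) (hhbar : 0 < hbar)
    (t : ℝ) (ht0 : 0 ≤ t)
    (U : E →ₗ[ℂ] E)
    (hU : ∀ k, U (ψ k) = Complex.exp (Complex.I * (En k : ℂ) * (t : ℂ) / (hbar : ℂ)) • ψ k)
    (α : ℝ) (hα : 1 < α)
    (ht : t < hbar * Real.pi / (2 * α * ΔE)) :
    ∃ (θ : ℝ) (r : E), ⟪φ, r⟫_ℂ = 0 ∧
      U φ = (Complex.exp ((θ : ℂ) * Complex.I) *
              ((Real.sqrt (1 - ‖r‖ ^ 2) : ℝ) : ℂ)) • φ + r ∧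
      ‖r‖ ^ 2 ≤ 1 - (1 - 1 / α ^ 2) * Real.cos (α * ΔE * t / hbar) + 1 / α ^ 2 := by
  classical
  have hα0 : (0:ℝ) < α := by linarith
  have hΔEpos : 0 < ΔE := by
    rcases hΔE.lt_or_eq with h | h
    · exact h
    · exfalso
      rw [← h, mul_zero, div_zero] at ht
      linarith
  -- coefficients and phases
  set c : Fin n → ℂ := fun k => ⟪ψ k, φ⟫_ℂ with hc
  set e : Fin n → ℂ := fun k =>
    Complex.exp (Complex.I * (En k : ℂ) * (t : ℂ) / (hbar : ℂ)) with he
  have hφsum : ∑ k, c k • ψ k = φ := ψ.sum_repr' φ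
  have hUφ : U φ = ∑ k, (c k * e k) • ψ k := by
    conv_lhs => rw [← hφsum]
    rw [map_sum]
    refine Finset.sum_congr rfl fun k _ => ?_
    rw [map_smul, hU k, smul_smul]
  have horth := ψ.orthonormal
  have hinner_U : ∀ k, ⟪ψ k, U φ⟫_ℂ = c k * e k := by
    intro k; rw [hUφ]; exact horth.inner_right_fintype _ k
  have hpc : ∀ k, ((p k : ℝ) : ℂ) = (starRingEnd ℂ) (c k) * c k := by
    intro k
    rw [hp k, ← Complex.normSq_eq_conj_mul_self]
    norm_cast
    rw [Complex.sq_norm]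
  have ha : ⟪φ, U φ⟫_ℂ = ∑ k, (p k : ℂ) * e k := by
    nth_rewrite 1 [← hφsum]
    rw [sum_inner]
    refine Finset.sum_congr rfl fun k _ => ?_
    rw [inner_smul_left, hinner_U k, hpc k]; ring
  have hpsum : ∑ k, p k = 1 := by
    have h1 : ⟪φ, φ⟫_ℂ = ∑ k, (p k : ℂ) := by
      nth_rewrite 1 [← hφsum]
      rw [sum_inner]
      refine Finset.sum_congr rfl fun k _ => ?_
      rw [inner_smul_left, hpc k]
    have h2 : ⟪φ, φ⟫_ℂ = 1 := by
      rw [inner_self_eq_norm_sq_to_K, hφ]; norm_num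
    have : ((∑ k, p k : ℝ) : ℂ) = ((1:ℝ):ℂ) := by
      push_cast
      rw [← h1, h2]
    exact_mod_cast this
  have hpnonneg : ∀ k, 0 ≤ p k := fun k => by rw [hp k]; positivity
  have heconj : ∀ k, (starRingEnd ℂ) (e k) * e k = 1 := by
    intro k
    rw [he]
    simp only
    rw [← Complex.exp_conj, ← Complex.exp_add]
    have : (starRingEnd ℂ) (Complex.I * (En k : ℂ) * (t : ℂ) / (hbar : ℂ))
        + Complex.I * (En k : ℂ) * (t : ℂ) / (hbar : ℂ) = 0 := by
      simp [map_div₀, map_mul, Complex.conj_I, Complex.conj_ofReal]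
      ring
    rw [this, Complex.exp_zero]
  have hUnorm : ‖U φ‖ = 1 := by
    have hsq : ⟪U φ, U φ⟫_ℂ = 1 := by
      nth_rewrite 1 [hUφ]
      rw [sum_inner]
      have hterm : ∀ k ∈ Finset.univ, ⟪(c k * e k) • ψ k, U φ⟫_ℂ
          = ((p k : ℝ) : ℂ) := by
        intro k _
        rw [inner_smul_left, hinner_U k, hpc k, map_mul]
        calc (starRingEnd ℂ) (c k) * (starRingEnd ℂ) (e k) * (c k * e k)
            = ((starRingEnd ℂ) (c k) * c k) * ((starRingEnd ℂ) (e k) * e k) := by ring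
          _ = (starRingEnd ℂ) (c k) * c k * 1 := by rw [heconj k]
          _ = (starRingEnd ℂ) (c k) * c k := by rw [mul_one]
      rw [Finset.sum_congr rfl hterm, ← Complex.ofReal_sum, hpsum, Complex.ofReal_one]
    have h3 : (‖U φ‖ : ℝ) ^ 2 = 1 := by
      rw [← inner_self_eq_norm_sq (𝕜 := ℂ), hsq]
      simp
    nlinarith [norm_nonneg (U φ)]
  -- survival amplitude lower bound
  set τ : ℝ := ΔE * t / hbar with hτ
  have hRe : 1 - τ ^ 2 / 2 ≤ ‖⟪φ, U φ⟫_ℂ‖ := by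
    set x : ℝ := -(Emean * t / hbar) with hx
    have hwa : Complex.exp ((x : ℂ) * Complex.I) * ⟪φ, U φ⟫_ℂ
        = ∑ k, (p k : ℂ) *
            Complex.exp ((((En k - Emean) * t / hbar : ℝ) : ℂ) * Complex.I) := by
      rw [ha, Finset.mul_sum]
      refine Finset.sum_congr rfl fun k _ => ?_
      rw [he]
      simp only
      calc Complex.exp ((x : ℂ) * Complex.I) *
            ((p k : ℂ) * Complex.exp (Complex.I * (En k : ℂ) * (t : ℂ) / (hbar : ℂ)))
          = (p k : ℂ) * (Complex.exp ((x : ℂ) * Complex.I) *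
              Complex.exp (Complex.I * (En k : ℂ) * (t : ℂ) / (hbar : ℂ))) := by ring
        _ = (p k : ℂ) * Complex.exp ((x : ℂ) * Complex.I
              + Complex.I * (En k : ℂ) * (t : ℂ) / (hbar : ℂ)) := by
            rw [Complex.exp_add]
        _ = (p k : ℂ) *
            Complex.exp ((((En k - Emean) * t / hbar : ℝ) : ℂ) * Complex.I) := by
            congr 1
            rw [hx]
            push_cast
            ring
    have hre_le : (Complex.exp ((x : ℂ) * Complex.I) * ⟪φ, U φ⟫_ℂ).re
        ≤ ‖⟪φ, U φ⟫_ℂ‖ := by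
      have habs : ‖⟪φ, U φ⟫_ℂ‖
          = ‖Complex.exp ((x : ℂ) * Complex.I) * ⟪φ, U φ⟫_ℂ‖ := by
        rw [norm_mul, Complex.norm_exp_ofReal_mul_I, one_mul]
      rw [habs]
      exact Complex.re_le_norm _
    have hre_eq : (Complex.exp ((x : ℂ) * Complex.I) * ⟪φ, U φ⟫_ℂ).re
        = ∑ k, p k * Real.cos ((En k - Emean) * t / hbar) := by
      rw [hwa, Complex.re_sum]
      refine Finset.sum_congr rfl fun k _ => ?_
      rw [Complex.re_ofReal_mul, Complex.exp_ofReal_mul_I_re]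
    have hsum2 : ∑ k, p k * ((En k - Emean) * t / hbar) ^ 2 = τ ^ 2 := by
      have h1 : ∀ k ∈ Finset.univ, p k * ((En k - Emean) * t / hbar) ^ 2
          = p k * (En k - Emean) ^ 2 * (t / hbar) ^ 2 := fun k _ => by ring
      rw [Finset.sum_congr rfl h1, ← Finset.sum_mul, ← hvar, hτ]
      ring
    have hlow : 1 - τ ^ 2 / 2 ≤ ∑ k, p k * Real.cos ((En k - Emean) * t / hbar) := by
      have h2 : ∀ k ∈ Finset.univ,
          p k * (1 - ((En k - Emean) * t / hbar) ^ 2 / 2)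
          ≤ p k * Real.cos ((En k - Emean) * t / hbar) := fun k _ =>
        mul_le_mul_of_nonneg_left Real.one_sub_sq_div_two_le_cos (hpnonneg k)
      have h3 : ∑ k, p k * (1 - ((En k - Emean) * t / hbar) ^ 2 / 2)
          = 1 - τ ^ 2 / 2 := by
        have h4 : ∀ k ∈ Finset.univ,
            p k * (1 - ((En k - Emean) * t / hbar) ^ 2 / 2)
            = p k - p k * ((En k - Emean) * t / hbar) ^ 2 / 2 := fun k _ => by ring
        rw [Finset.sum_congr rfl h4, Finset.sum_sub_distrib, hpsum, ← Finset.sum_div,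
          hsum2]
      calc 1 - τ ^ 2 / 2 = _ := h3.symm
        _ ≤ _ := Finset.sum_le_sum h2
    rw [hre_eq] at hre_le
    linarith
  -- the decomposition
  have hφinner : ⟪φ, φ⟫_ℂ = 1 := by
    rw [inner_self_eq_norm_sq_to_K, hφ]
    norm_num
  have hdecomp : U φ = ⟪φ, U φ⟫_ℂ • φ + (U φ - ⟪φ, U φ⟫_ℂ • φ) := by abel
  have horr : ⟪⟪φ, U φ⟫_ℂ • φ, U φ - ⟪φ, U φ⟫_ℂ • φ⟫_ℂ = 0 := by
    rw [inner_smul_left, inner_sub_right, inner_smul_right, hφinner, mul_one,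
      sub_self, mul_zero]
  have hr2 : ‖U φ - ⟪φ, U φ⟫_ℂ • φ‖ ^ 2 = 1 - ‖⟪φ, U φ⟫_ℂ‖ ^ 2 := by
    have h1 := norm_add_sq (𝕜 := ℂ) (⟪φ, U φ⟫_ℂ • φ) (U φ - ⟪φ, U φ⟫_ℂ • φ)
    rw [← hdecomp, horr, map_zero, mul_zero, add_zero, norm_smul, hφ, mul_one,
      hUnorm] at h1
    linarith
  refine ⟨(⟪φ, U φ⟫_ℂ).arg, U φ - ⟪φ, U φ⟫_ℂ • φ, ?_, ?_, ?_⟩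
  · rw [inner_sub_right, inner_smul_right, hφinner, mul_one, sub_self]
  · have h5 : Real.sqrt (1 - ‖U φ - ⟪φ, U φ⟫_ℂ • φ‖ ^ 2) = ‖⟪φ, U φ⟫_ℂ‖ := by
      rw [hr2, show (1:ℝ) - (1 - ‖⟪φ, U φ⟫_ℂ‖ ^ 2) = ‖⟪φ, U φ⟫_ℂ‖ ^ 2 by ring,
        Real.sqrt_sq (norm_nonneg _)]
    rw [h5]
    have h6 : Complex.exp (((Complex.arg ⟪φ, U φ⟫_ℂ : ℝ) : ℂ) * Complex.I)
        * ((‖⟪φ, U φ⟫_ℂ‖ : ℝ) : ℂ) = ⟪φ, U φ⟫_ℂ := by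
      rw [mul_comm (Complex.exp _) _, Complex.norm_mul_exp_arg_mul_I]
    rw [h6]
    exact hdecomp
  · rw [hr2]
    have hd0 : 0 < 1 / α ^ 2 := by positivity
    have hd1 : 1 / α ^ 2 < 1 := by
      rw [div_lt_one (by positivity)]
      nlinarith
    by_cases hB : 0 < (1 - 1 / α ^ 2) * Real.cos (α * ΔE * t / hbar) - 1 / α ^ 2
    · have hs0 : 0 ≤ α * ΔE * t / hbar := by positivity
      have hs : α * ΔE * t / hbar < Real.pi / 2 := by
        rw [div_lt_div_iff₀ hhbar two_pos]
        have h2 : (0:ℝ) < 2 * α * ΔE := by positivity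
        rw [lt_div_iff₀ h2] at ht
        nlinarith
      obtain ⟨hk1, hk2⟩ := key_ineq (1 / α ^ 2) (α * ΔE * t / hbar) hd0 hd1 hs0 hs hB
      have hts : 1 / α ^ 2 * (α * ΔE * t / hbar) ^ 2 = τ ^ 2 := by
        rw [hτ]
        have hαne : α ≠ 0 := by positivity
        have hbne : hbar ≠ 0 := ne_of_gt hhbar
        field_simp
      rw [hts] at hk1 hk2
      have h7 : (1 - τ ^ 2 / 2) ^ 2 ≤ ‖⟪φ, U φ⟫_ℂ‖ ^ 2 :=
        pow_le_pow_left₀ hk1 hRe 2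
      linarith
    · push_neg at hB
      have := sq_nonneg ‖⟪φ, U φ⟫_ℂ‖
      linarith
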